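/- arXiv:2601.22405 — 4 statements merged into one kernel-verified Lean document; each statement's English description precedes it below -/
import Mathlib

section
/- The area of the symmetric difference of two open disks of radius R in ℝ² with centers x and y satisfies μ(B(x,R) Δ B(y,R)) ≤ 4R·‖x − y‖; consequently, the map x ↦ B(x, R) is Lipschitz with constant 4R with respect to the symmetric difference semi-metric induced by Lebesgue measure on ℝ². -/
open MeasureTheory Metric Set

set_option maxHeartbeats 1000000 in
/-- The Lebesgue area of the symmetric difference of two radius-`R` open disks in
the plane is at most `4 R ‖x − y‖`; i.e. `x ↦ B(x, R)` is `4R`-Lipschitz with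
respect to the symmetric difference semi-metric. -/
theorem ball_symmDiff_lipschitz (R : ℝ) (hR : 0 < R)
    (x y : EuclideanSpace ℝ (Fin 2)) :
    (volume (symmDiff (ball x R) (ball y R))).toReal ≤ 4 * R * ‖x - y‖ := by
  set d : ℝ := ‖x - y‖ with hd
  have hd0 : 0 ≤ d := norm_nonneg _
  set w : EuclideanSpace ℝ (Fin 2) := d • EuclideanSpace.single 1 1 with hw
  have hwnorm : ‖y - x‖ = ‖w‖ := by
    rw [hw, norm_smul, EuclideanSpace.norm_single]
    simp [hd, norm_sub_rev x y, abs_of_nonneg hd0]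
  set e := Submodule.reflection (ℝ ∙ ((y - x) - w))ᗮ with he
  have hev : e (y - x) = w := Submodule.reflection_sub hwnorm
  set T : EuclideanSpace ℝ (Fin 2) → EuclideanSpace ℝ (Fin 2) := fun z => e.symm z + x with hT
  have hTmp : MeasurePreserving T volume volume :=
    (measurePreserving_add_right volume x).comp e.symm.measurePreserving
  have h1 : T ⁻¹' (ball x R) = ball 0 R := by
    ext z
    simp [hT, mem_ball, dist_eq_norm]
  have h2 : T ⁻¹' (ball y R) = ball w R := by
    ext z
    have hz : e.symm z + x - y = e.symm (z - w) := by
      rw [map_sub, ← hev, e.symm_apply_apply]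
      abel
    simp only [hT, mem_preimage, mem_ball, dist_eq_norm, hz, e.symm.norm_map]
  have hmeas : MeasurableSet (symmDiff (ball x R) (ball y R)) :=
    measurableSet_ball.symmDiff measurableSet_ball
  have step1 : volume (symmDiff (ball x R) (ball y R))
      = volume (symmDiff (ball (0 : EuclideanSpace ℝ (Fin 2)) R) (ball w R)) := by
    rw [← hTmp.measure_preimage hmeas.nullMeasurableSet]
    congr 1
    simp only [Set.symmDiff_def, Set.preimage_union, Set.preimage_diff, h1, h2]
  -- transfer to ℝ × ℝ
  set φ : EuclideanSpace ℝ (Fin 2) ≃ᵐ ℝ × ℝ :=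
    (MeasurableEquiv.toLp 2 (Fin 2 → ℝ)).symm.trans (MeasurableEquiv.finTwoArrow) with hφdef
  have hφ : MeasurePreserving φ volume volume :=
    (volume_preserving_finTwoArrow ℝ).comp (EuclideanSpace.volume_preserving_symm_measurableEquiv_toLp (Fin 2))
  set U : Set (ℝ × ℝ) := {p | p.1 ^ 2 + p.2 ^ 2 < R ^ 2} with hU
  set V : Set (ℝ × ℝ) := {p | p.1 ^ 2 + (p.2 - d) ^ 2 < R ^ 2} with hV
  have hUball : φ.symm ⁻¹' (ball (0 : EuclideanSpace ℝ (Fin 2)) R) = U := by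
    ext p
    simp only [hφdef, mem_preimage, MeasurableEquiv.trans, MeasurableEquiv.symm,
      MeasurableEquiv.coe_mk, Equiv.symm_trans_apply, MeasurableEquiv.finTwoArrow,
      Equiv.symm_symm, mem_ball, dist_zero_right, EuclideanSpace.norm_eq]
    rw [Real.sqrt_lt' hR]
    simp [hU, MeasurableEquiv.toLp, Fin.sum_univ_two, Real.norm_eq_abs, sq_abs]
  have hVball : φ.symm ⁻¹' (ball w R) = V := by
    ext p
    simp only [hφdef, mem_preimage, MeasurableEquiv.trans, MeasurableEquiv.symm,
      MeasurableEquiv.coe_mk, Equiv.symm_trans_apply, MeasurableEquiv.finTwoArrow,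
      Equiv.symm_symm, mem_ball, dist_eq_norm, EuclideanSpace.norm_eq]
    rw [Real.sqrt_lt' hR]
    simp [hV, hw, MeasurableEquiv.toLp, Fin.sum_univ_two, Real.norm_eq_abs, sq_abs,
      EuclideanSpace.single_apply]
  have hmeas2 : MeasurableSet (symmDiff (ball (0 : EuclideanSpace ℝ (Fin 2)) R) (ball w R)) :=
    measurableSet_ball.symmDiff measurableSet_ball
  have step2 : volume (symmDiff (ball (0 : EuclideanSpace ℝ (Fin 2)) R) (ball w R))
      = volume (symmDiff U V) := by
    rw [← (hφ.symm φ).measure_preimage hmeas2.nullMeasurableSet]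
    congr 1
    simp only [Set.symmDiff_def, Set.preimage_union, Set.preimage_diff, hUball, hVball]
  -- measurability of U, V
  have hUm : MeasurableSet U := by
    rw [← hUball]; exact φ.symm.measurable measurableSet_ball
  have hVm : MeasurableSet V := by
    rw [← hVball]; exact φ.symm.measurable measurableSet_ball
  -- main estimate by slicing
  have step3 : volume (symmDiff U V) ≤ ENNReal.ofReal (2 * d) * ENNReal.ofReal (2 * R) := by
    rw [Measure.volume_eq_prod, Measure.prod_apply (hUm.symmDiff hVm)]
    have hbound : ∀ a : ℝ, volume (Prod.mk a ⁻¹' symmDiff U V)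
        ≤ (Ioo (-R) R).indicator (fun _ => ENNReal.ofReal (2 * d)) a := by
      intro a
      by_cases ha : a ∈ Ioo (-R) R
      · rw [indicator_of_mem ha]
        set u : ℝ := Real.sqrt (R ^ 2 - a ^ 2) with hu
        have ha2 : a ^ 2 < R ^ 2 := by
          obtain ⟨ha1, ha2⟩ := ha
          nlinarith
        have hu0 : 0 ≤ u := Real.sqrt_nonneg _
        have hu2 : u ^ 2 = R ^ 2 - a ^ 2 := Real.sq_sqrt (by linarith)
        have hsub : Prod.mk a ⁻¹' symmDiff U V ⊆ Icc (-u) (d - u) ∪ Icc u (d + u) := by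
          intro b hb
          simp only [Set.symmDiff_def, mem_preimage, mem_union, mem_diff, hU, hV,
            mem_setOf_eq] at hb
          have hupos : 0 < u := Real.sqrt_pos.mpr (by linarith)
          rcases hb with ⟨h1, h2⟩ | ⟨h1, h2⟩
          · push_neg at h2
            have hb2 : b ^ 2 < u ^ 2 := by linarith
            have hbd2 : u ^ 2 ≤ (b - d) ^ 2 := by linarith
            have hbu : b < u := by nlinarith
            have hbu' : -u < b := by nlinarith
            left
            constructor
            · linarith
            · by_contra hcon
              push_neg at hcon
              nlinarith [mul_pos (show (0:ℝ) < b - d + u by linarith)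
                (show (0:ℝ) < u - (b - d) by linarith)]
          · push_neg at h2
            have hb2 : (b - d) ^ 2 < u ^ 2 := by linarith
            have hbd2 : u ^ 2 ≤ b ^ 2 := by linarith
            have h5 : b - d < u := by nlinarith
            have h6 : -u < b - d := by nlinarith
            right
            constructor
            · by_contra hcon
              push_neg at hcon
              nlinarith [mul_pos (show (0:ℝ) < b + u by linarith)
                (show (0:ℝ) < u - b by linarith)]
            · linarith
        calc volume (Prod.mk a ⁻¹' symmDiff U V)
            ≤ volume (Icc (-u) (d - u) ∪ Icc u (d + u)) := measure_mono hsub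
          _ ≤ volume (Icc (-u) (d - u)) + volume (Icc u (d + u)) := measure_union_le _ _
          _ = ENNReal.ofReal (2 * d) := by
              rw [Real.volume_Icc, Real.volume_Icc, ← ENNReal.ofReal_add (by linarith) (by linarith)]
              ring_nf
      · rw [indicator_of_notMem ha]
        have : Prod.mk a ⁻¹' symmDiff U V = ∅ := by
          ext b
          simp only [Set.symmDiff_def, mem_preimage, mem_union, mem_diff, hU, hV,
            mem_setOf_eq, mem_empty_iff_false, iff_false]
          simp only [mem_Ioo, not_and_or, not_lt] at ha
          rcases ha with ha | ha
          · rintro (⟨h1, _⟩ | ⟨h1, _⟩) <;> nlinarith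
          · rintro (⟨h1, _⟩ | ⟨h1, _⟩) <;> nlinarith
        simp [this]
    calc ∫⁻ a, volume (Prod.mk a ⁻¹' symmDiff U V)
        ≤ ∫⁻ a, (Ioo (-R) R).indicator (fun _ => ENNReal.ofReal (2 * d)) a :=
          lintegral_mono hbound
      _ = ENNReal.ofReal (2 * d) * volume (Ioo (-R) R) := by
          rw [lintegral_indicator measurableSet_Ioo, setLIntegral_const]
      _ = ENNReal.ofReal (2 * d) * ENNReal.ofReal (2 * R) := by
          rw [Real.volume_Ioo]
          congr 1
          ring_nf
  have htotal : volume (symmDiff (ball x R) (ball y R)) ≤ ENNReal.ofReal (4 * R * d) := by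
    rw [step1, step2]
    refine step3.trans_eq ?_
    rw [← ENNReal.ofReal_mul (by linarith)]
    ring_nf
  calc (volume (symmDiff (ball x R) (ball y R))).toReal
      ≤ (ENNReal.ofReal (4 * R * d)).toReal := by
        exact ENNReal.toReal_mono ENNReal.ofReal_ne_top htotal
    _ ≤ 4 * R * d := le_of_eq (ENNReal.toReal_ofReal (by positivity))
end

section
/- Let 𝒟 ⊆ ℝ² be bounded with diameter D, let φ > 0, and for z = (x, θ) ∈ 𝒟 × ℝ define the infinite-range visibility cone C(z) = { y ∈ 𝒟 : |θ − atan2(y₂ − x₂, y₁ − x₁)| ≤ φ/2 }. Then z ↦ C(z) is μ-globally Lipschitz over 𝒟 × ℝ with respect to Lebesgue measure μ on ℝ², specifically μ(C(z') Δ C(z'')) ≤ 2D·√(D² + 1) · ‖z' − z''‖ for all z', z'' ∈ 𝒟 × ℝ. -/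
open MeasureTheory Metric Set Complex

noncomputable section FovConeAux

/-- The linear map `z ↦ z.re • u + z.im • v`. -/
def fovLmap (u v : ℂ) : ℂ →ₗ[ℝ] ℂ :=
  Complex.reLm.smulRight u + Complex.imLm.smulRight v

lemma fovLmap_apply (u v z : ℂ) : fovLmap u v z = z.re • u + z.im • v := rfl

lemma fovLmap_det (u v : ℂ) :
    LinearMap.det (fovLmap u v) = u.re * v.im - u.im * v.re := by
  have hM : LinearMap.toMatrix Complex.basisOneI Complex.basisOneI (fovLmap u v)
      = !![u.re, v.re; u.im, v.im] := by
    ext i j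
    fin_cases i <;> fin_cases j <;>
      simp [LinearMap.toMatrix_apply, fovLmap_apply, Complex.coe_basisOneI_repr]
  rw [← LinearMap.det_toMatrix Complex.basisOneI, hM, Matrix.det_fin_two_of]
  ring

lemma fov_volume_rect (p q r s : ℝ) :
    volume {z : ℂ | z.re ∈ Icc p q ∧ z.im ∈ Icc r s}
      = ENNReal.ofReal (q - p) * ENNReal.ofReal (s - r) := by
  have h : {z : ℂ | z.re ∈ Icc p q ∧ z.im ∈ Icc r s}
      = Complex.measurableEquivRealProd ⁻¹' (Icc p q ×ˢ Icc r s) := by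
    ext z
    simp only [Set.mem_setOf_eq, Set.mem_Icc, Set.mem_preimage, Set.mem_prod,
      Complex.measurableEquivRealProd_apply]
  rw [h, Complex.volume_preserving_equiv_real_prod.measure_preimage
      ((measurableSet_Icc.prod measurableSet_Icc).nullMeasurableSet)]
  rw [Measure.volume_eq_prod, Measure.prod_prod, Real.volume_Icc, Real.volume_Icc]

lemma fov_volume_parallelogram_le (u v : ℂ) (S T : ℝ) (hS : 0 ≤ S) (hT : 0 ≤ T) :
    volume {w : ℂ | ∃ s ∈ Icc 0 S, ∃ t ∈ Icc 0 T, w = s • u + t • v}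
      ≤ ENNReal.ofReal (S * T * (‖u‖ * ‖v‖)) := by
  have himg : {w : ℂ | ∃ s ∈ Icc 0 S, ∃ t ∈ Icc 0 T, w = s • u + t • v}
      = fovLmap u v '' {z : ℂ | z.re ∈ Icc 0 S ∧ z.im ∈ Icc 0 T} := by
    ext w
    constructor
    · rintro ⟨s, hs, t, ht, rfl⟩
      exact ⟨Complex.mk s t, ⟨hs, ht⟩, rfl⟩
    · rintro ⟨z, ⟨h1, h2⟩, rfl⟩
      exact ⟨z.re, h1, z.im, h2, rfl⟩
  rw [himg, MeasureTheory.Measure.addHaar_image_linearMap, fov_volume_rect, fovLmap_det]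
  rw [sub_zero, sub_zero, ← ENNReal.ofReal_mul hS, ← ENNReal.ofReal_mul (abs_nonneg _)]
  apply ENNReal.ofReal_le_ofReal
  have hdet : |u.re * v.im - u.im * v.re| ≤ ‖u‖ * ‖v‖ := by
    have hsq : (u.re * v.im - u.im * v.re) ^ 2 ≤ (‖u‖ * ‖v‖) ^ 2 := by
      rw [mul_pow, Complex.sq_norm, Complex.sq_norm, Complex.normSq_apply, Complex.normSq_apply]
      nlinarith [sq_nonneg (u.re * v.re + u.im * v.im)]
    calc |u.re * v.im - u.im * v.re| = Real.sqrt ((u.re * v.im - u.im * v.re) ^ 2) :=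
          (Real.sqrt_sq_eq_abs _).symm
      _ ≤ Real.sqrt ((‖u‖ * ‖v‖) ^ 2) := Real.sqrt_le_sqrt hsq
      _ = ‖u‖ * ‖v‖ := Real.sqrt_sq (by positivity)
  calc |u.re * v.im - u.im * v.re| * (S * T) ≤ ‖u‖ * ‖v‖ * (S * T) := by
        apply mul_le_mul_of_nonneg_right hdet (by positivity)
    _ = S * T * (‖u‖ * ‖v‖) := by ring

lemma fov_sector_small (D c ℓ : ℝ) (hD : 0 ≤ D) (h0 : 0 ≤ ℓ) (h1 : ℓ ≤ 1) :
    volume {w : ℂ | ‖w‖ ≤ D ∧ Complex.arg w ∈ Icc c (c + ℓ)}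
      ≤ ENNReal.ofReal (D ^ 2 * ℓ) := by
  set u := Complex.exp (c * Complex.I) with hu
  set v := Complex.exp (c * Complex.I) * Complex.I with hv
  have habsu : ‖u‖ = 1 := Complex.norm_exp_ofReal_mul_I c
  have habsv : ‖v‖ = 1 := by
    rw [hv, norm_mul, Complex.norm_I, habsu, mul_one]
  have hsub : {w : ℂ | ‖w‖ ≤ D ∧ Complex.arg w ∈ Icc c (c + ℓ)}
      ⊆ {w : ℂ | ∃ s ∈ Icc 0 D, ∃ t ∈ Icc 0 (D * ℓ), w = s • u + t • v} := by
    rintro w ⟨habs, h1', h2'⟩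
    set r := ‖w‖ with hr
    set t := Complex.arg w - c with ht
    have ht0 : 0 ≤ t := by simp [ht]; linarith
    have htl : t ≤ ℓ := by simp [ht]; linarith
    have hrpos : 0 ≤ r := norm_nonneg w
    have hcos0 : 0 ≤ Real.cos t := by
      apply Real.cos_nonneg_of_mem_Icc
      constructor <;> [linarith [Real.pi_gt_three]; linarith [Real.pi_gt_three]]
    have hsin0 : 0 ≤ Real.sin t := by
      apply Real.sin_nonneg_of_nonneg_of_le_pi ht0
      linarith [Real.pi_gt_three]
    refine ⟨r * Real.cos t, ⟨by positivity, ?_⟩, r * Real.sin t, ⟨by positivity, ?_⟩, ?_⟩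
    · calc r * Real.cos t ≤ r * 1 := by
            apply mul_le_mul_of_nonneg_left (Real.cos_le_one t) hrpos
        _ = r := mul_one r
        _ ≤ D := habs
    · apply mul_le_mul habs ?_ hsin0 hD
      exact le_trans (Real.sin_le ht0) htl
    · have hw : w = (r : ℂ) * Complex.exp ((Complex.arg w : ℂ) * Complex.I) :=
        (Complex.norm_mul_exp_arg_mul_I w).symm
      have hargeq : (Complex.arg w : ℂ) = (t : ℂ) + (c : ℂ) := by
        rw [ht]; push_cast; ring
      rw [Complex.real_smul, Complex.real_smul, hw, hargeq, add_mul, Complex.exp_add,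
        Complex.exp_mul_I, hu]
      push_cast
      rw [← Complex.ofReal_cos, ← Complex.ofReal_sin]
      push_cast
      ring
  calc volume {w : ℂ | ‖w‖ ≤ D ∧ Complex.arg w ∈ Icc c (c + ℓ)}
      ≤ volume {w : ℂ | ∃ s ∈ Icc 0 D, ∃ t ∈ Icc 0 (D * ℓ), w = s • u + t • v} :=
        measure_mono hsub
    _ ≤ ENNReal.ofReal (D * (D * ℓ) * (‖u‖ * ‖v‖)) :=
        fov_volume_parallelogram_le u v D (D * ℓ) hD (by positivity)
    _ = ENNReal.ofReal (D ^ 2 * ℓ) := by rw [habsu, habsv]; ring_nf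

lemma fov_sector (D c d : ℝ) (hD : 0 ≤ D) (hcd : c ≤ d) :
    volume {w : ℂ | ‖w‖ ≤ D ∧ Complex.arg w ∈ Icc c d}
      ≤ ENNReal.ofReal (D ^ 2 * (d - c)) := by
  rcases le_or_gt 4 (d - c) with hbig | hsmall
  · have hsub : {w : ℂ | ‖w‖ ≤ D ∧ Complex.arg w ∈ Icc c d}
        ⊆ {z : ℂ | z.re ∈ Icc (-D) D ∧ z.im ∈ Icc (-D) D} := by
      rintro w ⟨habs, -⟩
      have h1 := Complex.abs_re_le_norm w
      have h2 := Complex.abs_im_le_norm w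
      constructor <;> constructor <;>
        [linarith [abs_le.mp (le_trans h1 habs)]; linarith [(abs_le.mp (le_trans h1 habs)).2];
         linarith [(abs_le.mp (le_trans h2 habs)).1]; linarith [(abs_le.mp (le_trans h2 habs)).2]]
    calc volume {w : ℂ | ‖w‖ ≤ D ∧ Complex.arg w ∈ Icc c d}
        ≤ volume {z : ℂ | z.re ∈ Icc (-D) D ∧ z.im ∈ Icc (-D) D} := measure_mono hsub
      _ = ENNReal.ofReal (D - -D) * ENNReal.ofReal (D - -D) := fov_volume_rect _ _ _ _
      _ = ENNReal.ofReal ((D - -D) * (D - -D)) := (ENNReal.ofReal_mul (by linarith)).symm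
      _ ≤ ENNReal.ofReal (D ^ 2 * (d - c)) := by
          apply ENNReal.ofReal_le_ofReal; nlinarith
  · set m := (d - c) / 4 with hm
    have hm0 : 0 ≤ m := by rw [hm]; linarith
    have hm1 : m ≤ 1 := by rw [hm]; linarith
    have hsub : {w : ℂ | ‖w‖ ≤ D ∧ Complex.arg w ∈ Icc c d}
        ⊆ {w : ℂ | ‖w‖ ≤ D ∧ Complex.arg w ∈ Icc c (c + m)}
          ∪ ({w : ℂ | ‖w‖ ≤ D ∧ Complex.arg w ∈ Icc (c + m) (c + m + m)}
          ∪ ({w : ℂ | ‖w‖ ≤ D ∧ Complex.arg w ∈ Icc (c + m + m) (c + m + m + m)}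
          ∪ {w : ℂ | ‖w‖ ≤ D ∧
              Complex.arg w ∈ Icc (c + m + m + m) (c + m + m + m + m)})) := by
      rintro w ⟨habs, h1, h2⟩
      have hd : d = c + m + m + m + m := by rw [hm]; ring
      rcases le_total (Complex.arg w) (c + m) with h | h
      · exact Or.inl ⟨habs, h1, h⟩
      rcases le_total (Complex.arg w) (c + m + m) with h' | h'
      · exact Or.inr (Or.inl ⟨habs, h, h'⟩)
      rcases le_total (Complex.arg w) (c + m + m + m) with h'' | h''
      · exact Or.inr (Or.inr (Or.inl ⟨habs, h', h''⟩))
      · exact Or.inr (Or.inr (Or.inr ⟨habs, h'', by rw [← hd]; exact h2⟩))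
    have hpiece : ∀ c' : ℝ,
        volume {w : ℂ | ‖w‖ ≤ D ∧ Complex.arg w ∈ Icc c' (c' + m)}
          ≤ ENNReal.ofReal (D ^ 2 * m) := fun c' => fov_sector_small D c' m hD hm0 hm1
    calc volume {w : ℂ | ‖w‖ ≤ D ∧ Complex.arg w ∈ Icc c d}
        ≤ ENNReal.ofReal (D ^ 2 * m) + (ENNReal.ofReal (D ^ 2 * m)
            + (ENNReal.ofReal (D ^ 2 * m) + ENNReal.ofReal (D ^ 2 * m))) := by
          refine le_trans (measure_mono hsub) ?_
          refine le_trans (measure_union_le _ _) (add_le_add (hpiece c) ?_)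
          refine le_trans (measure_union_le _ _) (add_le_add (by simpa using hpiece (c + m)) ?_)
          refine le_trans (measure_union_le _ _)
            (add_le_add (by simpa using hpiece (c + m + m)) (by simpa using hpiece (c + m + m + m)))
      _ = ENNReal.ofReal (D ^ 2 * m + (D ^ 2 * m + (D ^ 2 * m + D ^ 2 * m))) := by
          rw [ENNReal.ofReal_add (by positivity) (by positivity),
            ENNReal.ofReal_add (by positivity) (by positivity),
            ENNReal.ofReal_add (by positivity) (by positivity)]
      _ ≤ ENNReal.ofReal (D ^ 2 * (d - c)) := by
          apply ENNReal.ofReal_le_ofReal; rw [hm]; ring_nf; nlinarith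

lemma fov_cone_crossing (D a b : ℝ) (ha : -Real.pi ≤ a) (hb : b ≤ Real.pi) (hab : a ≤ b)
    (v w : ℂ) (hw : ‖w‖ ≤ D) (hwv : ‖w - v‖ ≤ D)
    (hxor : (Complex.arg w ∈ Icc a b ∧ Complex.arg (w - v) ∉ Icc a b) ∨
            (Complex.arg (w - v) ∈ Icc a b ∧ Complex.arg w ∉ Icc a b)) :
    ∃ c, (c = a ∨ c = b) ∧ ∃ s ∈ Icc 0 D, ∃ t ∈ Icc (0:ℝ) 1,
      w = s • Complex.exp ((c : ℂ) * Complex.I) + t • v := by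
  have hD0 : 0 ≤ D := le_trans (norm_nonneg w) hw
  rcases eq_or_lt_of_le hD0 with hDeq | hD
  · exfalso
    have h1 : w = 0 := by
      have := le_antisymm (hDeq ▸ hw) (norm_nonneg w)
      simpa using this
    have h2 : v = 0 := by
      have h := le_antisymm (hDeq ▸ hwv) (norm_nonneg (w - v))
      have h' : w - v = 0 := by simpa [sub_eq_zero] using h
      rw [h1] at h'
      simpa [sub_eq_zero] using h'.symm
    rw [h1, h2, sub_zero] at hxor
    tauto
  set K := {z : ℂ | Complex.arg z ∈ Icc a b} with hK
  set f : ℝ × ℝ → ℂ := fun p => p.1 • Complex.exp ((p.2 : ℂ) * Complex.I) with hf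
  have hfc : Continuous f := by
    apply Continuous.smul continuous_fst
    exact Complex.continuous_exp.comp
      ((Complex.continuous_ofReal.comp continuous_snd).mul continuous_const)
  set Kc := f '' (Icc 0 (2 * D) ×ˢ Icc a b) with hKc
  have hKcomp : IsCompact Kc := (isCompact_Icc.prod isCompact_Icc).image hfc
  have hsub : ∀ z, z ∈ K → ‖z‖ ≤ 2 * D → z ∈ Kc := by
    intro z hz hz2
    refine ⟨(‖z‖, Complex.arg z), ⟨⟨norm_nonneg z, hz2⟩, hz⟩, ?_⟩
    simp only [hf]
    rw [Complex.real_smul, Complex.norm_mul_exp_arg_mul_I]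
  set O := {z : ℂ | z ≠ 0 ∧ Complex.arg z ∈ Ioo a b ∧ ‖z‖ < 2 * D} with hO
  have hOK : O ⊆ K := fun z hz => ⟨hz.2.1.1.le, hz.2.1.2.le⟩
  have hOKc : O ⊆ Kc := fun z hz => hsub z (hOK hz) hz.2.2.le
  have hOopen : IsOpen O := by
    rw [isOpen_iff_mem_nhds]
    rintro z ⟨hz0, hzarg, hzabs⟩
    have hslit : z ∈ Complex.slitPlane :=
      Complex.mem_slitPlane_iff_arg.2 ⟨ne_of_lt (lt_of_lt_of_le hzarg.2 hb), hz0⟩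
    have h1 : Complex.arg ⁻¹' Ioo a b ∈ nhds z :=
      (Complex.continuousAt_arg hslit).preimage_mem_nhds (isOpen_Ioo.mem_nhds hzarg)
    have h2 : ({0}ᶜ : Set ℂ) ∈ nhds z := isOpen_compl_singleton.mem_nhds hz0
    have h3 : (fun z : ℂ => ‖z‖) ⁻¹' Iio (2 * D) ∈ nhds z :=
      (isOpen_Iio.preimage continuous_norm).mem_nhds hzabs
    refine Filter.mem_of_superset (Filter.inter_mem h2 (Filter.inter_mem h1 h3)) ?_
    rintro y ⟨hy0, hyarg, hyabs⟩
    exact ⟨hy0, hyarg, hyabs⟩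
  have htri : ∀ z ∈ Kc, z ∉ O → ‖z‖ = 2 * D ∨
      ∃ c, (c = a ∨ c = b) ∧ z = (‖z‖ : ℝ) • Complex.exp ((c : ℂ) * Complex.I) := by
    rintro z ⟨⟨r, θ⟩, ⟨⟨hr0, hr2⟩, hθa, hθb⟩, rfl⟩ hzO
    dsimp only at hr0 hr2 hθa hθb
    have hfeq : f (r, θ) = r • Complex.exp ((θ : ℂ) * Complex.I) := rfl
    have habsz : ‖f (r, θ)‖ = r := by
      rw [hfeq, Complex.real_smul, norm_mul, Complex.norm_exp_ofReal_mul_I, mul_one,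
        Complex.norm_real, Real.norm_eq_abs, _root_.abs_of_nonneg hr0]
    rcases eq_or_lt_of_le hr0 with hr | hr
    · right
      refine ⟨a, Or.inl rfl, ?_⟩
      have hz0 : f (r, θ) = 0 := by rw [hfeq, ← hr, zero_smul]
      rw [hz0]
      simp
    rcases eq_or_lt_of_le hθa with hθ | hθ
    · right; refine ⟨a, Or.inl rfl, ?_⟩; rw [habsz, hfeq, hθ]
    rcases eq_or_lt_of_le hθb with hθ' | hθ'
    · right; refine ⟨b, Or.inr rfl, ?_⟩; rw [habsz, hfeq, ← hθ']
    rcases eq_or_lt_of_le hr2 with hr' | hr'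
    · left; rw [habsz, hr']
    exfalso
    apply hzO
    have hargz : Complex.arg (f (r, θ)) = θ := by
      rw [hfeq, Complex.real_smul, Complex.arg_real_mul _ hr, Complex.exp_mul_I]
      exact Complex.arg_cos_add_sin_mul_I ⟨lt_of_le_of_lt ha hθ, le_trans hθ'.le hb⟩
    refine ⟨?_, by rw [hargz]; exact ⟨hθ, hθ'⟩, by rw [habsz]; exact hr'⟩
    intro h0
    rw [h0] at habsz
    simp only [norm_zero] at habsz
    exact absurd habsz (ne_of_lt hr)
  have key : ∀ w₁ w₂ : ℂ, w₁ ∈ K → w₂ ∉ K → ‖w₁‖ ≤ D → ‖w₂‖ ≤ D →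
      ∃ p ∈ segment ℝ w₁ w₂, ∃ c, (c = a ∨ c = b) ∧ ∃ s ∈ Icc 0 D,
        p = s • Complex.exp ((c : ℂ) * Complex.I) := by
    intro w₁ w₂ h1 h2 hd1 hd2
    suffices hp : ∃ p ∈ segment ℝ w₁ w₂, p ∈ Kc ∧ p ∉ O by
      obtain ⟨p, hpseg, hpKc, hpO⟩ := hp
      have hpD : ‖p‖ ≤ D := by
        have hmem : p ∈ Metric.closedBall (0 : ℂ) D := by
          apply (convex_closedBall (0 : ℂ) D).segment_subset ?_ ?_ hpseg
          · rw [Metric.mem_closedBall, Complex.dist_eq, sub_zero]; exact hd1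
          · rw [Metric.mem_closedBall, Complex.dist_eq, sub_zero]; exact hd2
        rw [Metric.mem_closedBall, Complex.dist_eq, sub_zero] at hmem
        exact hmem
      rcases htri p hpKc hpO with h2D | ⟨c, hc, heq⟩
      · exfalso; rw [h2D] at hpD; linarith
      · exact ⟨p, hpseg, c, hc, ‖p‖, ⟨norm_nonneg p, hpD⟩, heq⟩
    by_cases hw₂Kc : w₂ ∈ Kc
    · exact ⟨w₂, right_mem_segment ℝ w₁ w₂, hw₂Kc, fun hO' => h2 (hOK hO')⟩
    · by_contra hno
      push_neg at hno
      have hcover : segment ℝ w₁ w₂ ⊆ Kcᶜ ∪ O := by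
        intro p hp
        by_cases hpKc : p ∈ Kc
        · exact Or.inr (hno p hp hpKc)
        · exact Or.inl hpKc
      have hw₁Kc : w₁ ∈ Kc := hsub w₁ h1 (by linarith)
      have hpre : IsPreconnected (segment ℝ w₁ w₂) := (convex_segment w₁ w₂).isPreconnected
      obtain ⟨q, hqseg, hqc, hqO⟩ := hpre Kcᶜ O hKcomp.isClosed.isOpen_compl hOopen hcover
        ⟨w₂, right_mem_segment ℝ w₁ w₂, hw₂Kc⟩
        ⟨w₁, left_mem_segment ℝ w₁ w₂, Or.elim (hcover (left_mem_segment ℝ w₁ w₂))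
          (fun h => absurd hw₁Kc h) id⟩
      exact hqc (hOKc hqO)
  rcases hxor with ⟨hK1, hK2⟩ | ⟨hK1, hK2⟩
  · obtain ⟨p, hpseg, c, hc, s, hs, heq⟩ := key w (w - v) hK1 hK2 hw hwv
    obtain ⟨t₁, t₂, ht₁, ht₂, hsum, hp⟩ := hpseg
    have hpw : p = w - t₂ • v := by
      rw [← hp, smul_sub, ← add_sub_assoc, ← add_smul, hsum, one_smul]
    refine ⟨c, hc, s, hs, t₂, ⟨ht₂, by linarith⟩, ?_⟩
    rw [← heq, hpw]
    abel
  · obtain ⟨p, hpseg, c, hc, s, hs, heq⟩ := key (w - v) w hK1 hK2 hwv hw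
    obtain ⟨t₁, t₂, ht₁, ht₂, hsum, hp⟩ := hpseg
    have hpw : p = w - t₁ • v := by
      rw [← hp, smul_sub]
      have : t₁ • w + t₂ • w = w := by rw [← add_smul, hsum, one_smul]
      calc t₁ • w - t₁ • v + t₂ • w = (t₁ • w + t₂ • w) - t₁ • v := by abel
        _ = w - t₁ • v := by rw [this]
    refine ⟨c, hc, s, hs, t₁, ⟨ht₁, by linarith⟩, ?_⟩
    rw [← heq, hpw]
    abel

end FovConeAux

open MeasureTheory Metric

/-- The infinite-range visibility cone
`C(x, θ) = { y ∈ 𝒟 : |θ − arg(y − x)| ≤ φ/2 }` over a bounded domain `𝒟 ⊆ ℝ² ≃ ℂ`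
of diameter `D` is μ-globally Lipschitz:
`μ(C z' Δ C z'') ≤ 2 D √(D² + 1) ‖z' − z''‖`. -/
theorem fov_cone_mu_globally_lipschitz
    (𝒟 : Set ℂ) (hbdd : Bornology.IsBounded 𝒟) (D : ℝ)
    (hD : Metric.diam 𝒟 = D) (φ : ℝ) (hφ : 0 < φ)
    (C : ℂ × ℝ → Set ℂ)
    (hC : ∀ x θ, C (x, θ) = {y ∈ 𝒟 | |θ - Complex.arg (y - x)| ≤ φ / 2}) :
    ∀ x' ∈ 𝒟, ∀ x'' ∈ 𝒟, ∀ θ' θ'' : ℝ,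
      (volume (symmDiff (C (x', θ')) (C (x'', θ'')))).toReal
        ≤ 2 * D * Real.sqrt (D ^ 2 + 1) *
            Real.sqrt (‖x' - x''‖ ^ 2 + (θ' - θ'') ^ 2) := by
  intro x' hx' x'' hx'' θ' θ''
  have hD0 : 0 ≤ D := hD ▸ Metric.diam_nonneg
  have hdist : ∀ y ∈ 𝒟, ∀ x ∈ 𝒟, ‖y - x‖ ≤ D := by
    intro y hy x hx
    have h := Metric.dist_le_diam_of_mem hbdd hy hx
    rwa [Complex.dist_eq, hD] at h
  set δθ := |θ' - θ''| with hδθ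
  set δx := ‖x' - x''‖ with hδx
  have hδθ0 : 0 ≤ δθ := abs_nonneg _
  have hδx0 : 0 ≤ δx := norm_nonneg _
  have hnorm : ‖x' - x''‖ = δx := by rw [hδx]
  have hsqθ : (θ' - θ'') ^ 2 = δθ ^ 2 := (_root_.sq_abs _).symm
  clear_value δθ δx
  have hpre : ∀ (x : ℂ) (S : Set ℂ), volume ((fun y => y - x) ⁻¹' S) = volume S := by
    intro x S
    simpa [sub_eq_add_neg] using measure_preimage_add_right volume (-x) S
  -- Part 1 : rotation
  have bound1 : volume (symmDiff (C (x', θ')) (C (x', θ'')))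
      ≤ ENNReal.ofReal (D ^ 2 * δθ) + ENNReal.ofReal (D ^ 2 * δθ) := by
    set c1 := min θ' θ'' - φ / 2 with hc1
    set d1 := max θ' θ'' - φ / 2 with hd1
    set c2 := min θ' θ'' + φ / 2 with hc2
    set d2 := max θ' θ'' + φ / 2 with hd2
    clear_value c1 d1 c2 d2
    have hsub : symmDiff (C (x', θ')) (C (x', θ''))
        ⊆ (fun y => y - x') ⁻¹' {w : ℂ | ‖w‖ ≤ D ∧ Complex.arg w ∈ Icc c1 d1}
          ∪ (fun y => y - x') ⁻¹' {w : ℂ | ‖w‖ ≤ D ∧ Complex.arg w ∈ Icc c2 d2} := by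
      intro y hy
      rw [Set.mem_symmDiff] at hy
      have hy𝒟 : y ∈ 𝒟 := by
        rcases hy with ⟨h, _⟩ | ⟨h, _⟩ <;> (rw [hC] at h; exact h.1)
      have habs : ‖y - x'‖ ≤ D := hdist y hy𝒟 x' hx'
      have hxor : (|θ' - Complex.arg (y - x')| ≤ φ / 2 ∧ ¬|θ'' - Complex.arg (y - x')| ≤ φ / 2)
          ∨ (|θ'' - Complex.arg (y - x')| ≤ φ / 2 ∧ ¬|θ' - Complex.arg (y - x')| ≤ φ / 2) := by
        rcases hy with ⟨h1, h2⟩ | ⟨h1, h2⟩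
        · rw [hC] at h1 h2
          exact Or.inl ⟨h1.2, fun hc' => h2 ⟨hy𝒟, hc'⟩⟩
        · rw [hC] at h1 h2
          exact Or.inr ⟨h1.2, fun hc' => h2 ⟨hy𝒟, hc'⟩⟩
      have hmm1 : min θ' θ'' ≤ θ' := min_le_left _ _
      have hmm2 : min θ' θ'' ≤ θ'' := min_le_right _ _
      have hmm3 : θ' ≤ max θ' θ'' := le_max_left _ _
      have hmm4 : θ'' ≤ max θ' θ'' := le_max_right _ _
      simp only [Set.mem_union, Set.mem_preimage, Set.mem_setOf_eq, Set.mem_Icc]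
      rcases hxor with ⟨h1, h2⟩ | ⟨h1, h2⟩ <;>
        (rw [abs_le] at h1
         obtain ⟨h1a, h1b⟩ := h1
         rcases lt_abs.mp (not_le.mp h2) with h3 | h3)
      · exact Or.inl ⟨habs, by constructor <;> linarith⟩
      · exact Or.inr ⟨habs, by constructor <;> linarith⟩
      · exact Or.inl ⟨habs, by constructor <;> linarith⟩
      · exact Or.inr ⟨habs, by constructor <;> linarith⟩
    refine le_trans (measure_mono hsub) (le_trans (measure_union_le _ _) ?_)
    rw [hpre, hpre]
    have e1 : d1 - c1 = δθ := by rw [hd1, hc1, hδθ, ← max_sub_min_eq_abs' θ' θ'']; ring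
    have e2 : d2 - c2 = δθ := by rw [hd2, hc2, hδθ, ← max_sub_min_eq_abs' θ' θ'']; ring
    have s1 := fov_sector D c1 d1 hD0 (by rw [hc1, hd1]; exact sub_le_sub_right min_le_max _)
    have s2 := fov_sector D c2 d2 hD0 (by rw [hc2, hd2]; exact add_le_add min_le_max le_rfl)
    rw [e1] at s1
    rw [e2] at s2
    exact add_le_add s1 s2
  -- Part 2 : translation
  have bound2 : volume (symmDiff (C (x', θ'')) (C (x'', θ'')))
      ≤ ENNReal.ofReal (D * δx) + ENNReal.ofReal (D * δx) := by
    set a := max (θ'' - φ / 2) (-Real.pi) with ha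
    set b := min (θ'' + φ / 2) Real.pi with hb
    have haπ : -Real.pi ≤ a := le_max_right _ _
    have hbπ : b ≤ Real.pi := min_le_right _ _
    have hiff : ∀ z : ℂ, |θ'' - Complex.arg z| ≤ φ / 2 ↔ Complex.arg z ∈ Icc a b := by
      intro z
      rw [abs_le, Set.mem_Icc]
      have g1 := Complex.neg_pi_lt_arg z
      have g2 := Complex.arg_le_pi z
      constructor
      · rintro ⟨h1, h2⟩
        constructor
        · apply max_le (by linarith) (by linarith)
        · exact le_min (by linarith) g2
      · rintro ⟨h1, h2⟩
        have k1 : θ'' - φ / 2 ≤ Complex.arg z := le_trans (le_max_left _ _) h1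
        have k2 : Complex.arg z ≤ θ'' + φ / 2 := le_trans h2 (min_le_left _ _)
        constructor <;> linarith
    by_cases hab : a ≤ b
    · set v := x' - x'' with hv
      set Pa := {w : ℂ | ∃ s ∈ Icc 0 D, ∃ t ∈ Icc (0:ℝ) 1,
          w = s • Complex.exp ((a : ℂ) * Complex.I) + t • v} with hPa
      set Pb := {w : ℂ | ∃ s ∈ Icc 0 D, ∃ t ∈ Icc (0:ℝ) 1,
          w = s • Complex.exp ((b : ℂ) * Complex.I) + t • v} with hPb
      have hsub : symmDiff (C (x', θ'')) (C (x'', θ''))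
          ⊆ (fun y => y - x'') ⁻¹' Pa ∪ (fun y => y - x'') ⁻¹' Pb := by
        intro y hy
        rw [Set.mem_symmDiff] at hy
        have hy𝒟 : y ∈ 𝒟 := by
          rcases hy with ⟨h, _⟩ | ⟨h, _⟩ <;> (rw [hC] at h; exact h.1)
        have habs1 : ‖y - x'‖ ≤ D := hdist y hy𝒟 x' hx'
        have habs2 : ‖y - x''‖ ≤ D := hdist y hy𝒟 x'' hx''
        have hwv : y - x'' - v = y - x' := by rw [hv]; ring
        have hxor : (Complex.arg (y - x'') ∈ Icc a b ∧ Complex.arg (y - x'' - v) ∉ Icc a b)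
            ∨ (Complex.arg (y - x'' - v) ∈ Icc a b ∧ Complex.arg (y - x'') ∉ Icc a b) := by
          rw [hwv]
          rcases hy with ⟨h1, h2⟩ | ⟨h1, h2⟩
          · rw [hC] at h1 h2
            refine Or.inr ⟨(hiff _).mp h1.2, fun hc' => h2 ⟨hy𝒟, (hiff _).mpr hc'⟩⟩
          · rw [hC] at h1 h2
            refine Or.inl ⟨(hiff _).mp h1.2, fun hc' => h2 ⟨hy𝒟, (hiff _).mpr hc'⟩⟩
        obtain ⟨c, hc, s, hs, t, ht, heq⟩ :=
          fov_cone_crossing D a b haπ hbπ hab v (y - x'') habs2 (by rw [hwv]; exact habs1) hxor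
        rcases hc with rfl | rfl
        · exact Or.inl ⟨s, hs, t, ht, heq⟩
        · exact Or.inr ⟨s, hs, t, ht, heq⟩
      refine le_trans (measure_mono hsub) (le_trans (measure_union_le _ _) ?_)
      rw [hpre, hpre]
      have habsv : ‖v‖ = δx := by rw [hv, hδx]
      have pb : ∀ c : ℝ, volume {w : ℂ | ∃ s ∈ Icc 0 D, ∃ t ∈ Icc (0:ℝ) 1,
          w = s • Complex.exp ((c : ℂ) * Complex.I) + t • v} ≤ ENNReal.ofReal (D * δx) := by
        intro c
        refine le_trans (fov_volume_parallelogram_le _ v D 1 hD0 zero_le_one) ?_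
        apply ENNReal.ofReal_le_ofReal
        rw [Complex.norm_exp_ofReal_mul_I, habsv]
        ring_nf
        exact le_refl _
      exact add_le_add (pb a) (pb b)
    · have hempty : ∀ x : ℂ, C (x, θ'') = ∅ := by
        intro x
        rw [hC]
        ext y
        simp only [Set.mem_sep_iff, Set.mem_empty_iff_false, iff_false, not_and]
        intro _ hcond
        rw [hiff] at hcond
        exact hab (le_trans hcond.1 hcond.2)
      rw [hempty x', hempty x'']
      simp [symmDiff_self]
  -- combine
  have htri : volume (symmDiff (C (x', θ')) (C (x'', θ'')))
      ≤ volume (symmDiff (C (x', θ')) (C (x', θ'')))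
        + volume (symmDiff (C (x', θ'')) (C (x'', θ''))) := by
    refine le_trans (measure_mono (symmDiff_triangle (C (x', θ')) (C (x', θ'')) (C (x'', θ'')))) ?_
    exact measure_union_le _ _
  have htot : volume (symmDiff (C (x', θ')) (C (x'', θ'')))
      ≤ ENNReal.ofReal (D ^ 2 * δθ + D ^ 2 * δθ + (D * δx + D * δx)) := by
    have hA : 0 ≤ D ^ 2 * δθ := mul_nonneg (sq_nonneg D) hδθ0
    have hB : 0 ≤ D * δx := mul_nonneg hD0 hδx0
    rw [ENNReal.ofReal_add (by linarith) (by linarith),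
      ENNReal.ofReal_add hA hA, ENNReal.ofReal_add hB hB]
    exact le_trans htri (add_le_add bound1 bound2)
  have hreal : D ^ 2 * δθ + D ^ 2 * δθ + (D * δx + D * δx)
      ≤ 2 * D * Real.sqrt (D ^ 2 + 1) * Real.sqrt (‖x' - x''‖ ^ 2 + (θ' - θ'') ^ 2) := by
    rw [hnorm, hsqθ]
    set s1 := Real.sqrt (D ^ 2 + 1) with hs1
    set s2 := Real.sqrt (δx ^ 2 + δθ ^ 2) with hs2
    have hs1sq : s1 ^ 2 = D ^ 2 + 1 := by rw [hs1]; exact Real.sq_sqrt (by positivity)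
    have hs2sq : s2 ^ 2 = δx ^ 2 + δθ ^ 2 := by
      rw [hs2]; exact Real.sq_sqrt (by nlinarith [sq_nonneg δx, sq_nonneg δθ])
    have hs1n : 0 ≤ s1 := by rw [hs1]; exact Real.sqrt_nonneg _
    have hs2n : 0 ≤ s2 := by rw [hs2]; exact Real.sqrt_nonneg _
    clear_value s1 s2
    have hln : 0 ≤ D * δθ + δx := by nlinarith [mul_nonneg hD0 hδθ0]
    have hkey : D * δθ + δx ≤ s1 * s2 := by
      have hsq2 : (D * δθ + δx) ^ 2 ≤ (s1 * s2) ^ 2 := by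
        rw [mul_pow, hs1sq, hs2sq]
        nlinarith [sq_nonneg (D * δx - δθ)]
      calc D * δθ + δx = Real.sqrt ((D * δθ + δx) ^ 2) := (Real.sqrt_sq hln).symm
        _ ≤ Real.sqrt ((s1 * s2) ^ 2) := Real.sqrt_le_sqrt hsq2
        _ = s1 * s2 := Real.sqrt_sq (mul_nonneg hs1n hs2n)
    nlinarith [mul_le_mul_of_nonneg_left hkey (by positivity : (0:ℝ) ≤ 2 * D)]
  refine ENNReal.toReal_le_of_le_ofReal (by positivity) ?_
  exact le_trans htot (le_trans (ENNReal.ofReal_le_ofReal hreal) (le_of_eq (by rw [hnorm])))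
end

section
/- Let D ⊆ ℝ² be nonempty, closed, and convex, and let g : D → ℝ. Define f(x) = g(π_D(x)) + dist(x, D). Then a point x ∈ D is a local minimizer of g on D (with respect to the subspace topology on D) if and only if x is a local minimizer of f on ℝ². -/
open Metric

/-- With `f(x) = g(π_D x) + dist(x, D)`, a point of `D` is a local minimizer of
`g` on `D` iff it is a local minimizer of `f` on `ℝ²`. -/
theorem augmented_metric_local_min_iff
    (D : Set (EuclideanSpace ℝ (Fin 2))) (hne : D.Nonempty)
    (hclosed : IsClosed D) (hconv : Convex ℝ D)
    (π : EuclideanSpace ℝ (Fin 2) → EuclideanSpace ℝ (Fin 2))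
    (hπmem : ∀ y, π y ∈ D)
    (hπproj : ∀ y, ∀ z ∈ D, ‖y - π y‖ ≤ ‖y - z‖)
    (g : EuclideanSpace ℝ (Fin 2) → ℝ)
    (f : EuclideanSpace ℝ (Fin 2) → ℝ)
    (hf : ∀ y, f y = g (π y) + Metric.infDist y D)
    (x : EuclideanSpace ℝ (Fin 2)) (hx : x ∈ D) :
    (∃ ε > 0, ∀ y ∈ ball x ε ∩ D, g x ≤ g y) ↔
      (∃ ε > 0, ∀ y ∈ ball x ε, f x ≤ f y) := by
  have hfix : ∀ y ∈ D, π y = y := by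
    intro y hy
    have h := hπproj y y hy
    simp only [sub_self, norm_zero] at h
    have : ‖y - π y‖ = 0 := le_antisymm h (norm_nonneg _)
    have := sub_eq_zero.mp (norm_eq_zero.mp this)
    exact this.symm
  have hfx : f x = g x := by
    rw [hf, hfix x hx, Metric.infDist_zero_of_mem hx, add_zero]
  constructor
  · rintro ⟨ε, hε, hmin⟩
    refine ⟨ε / 2, by linarith, fun y hy => ?_⟩
    have hyx : ‖y - x‖ < ε / 2 := by
      rw [← dist_eq_norm]; exact mem_ball.mp hy
    have hπy : π y ∈ ball x ε ∩ D := by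
      refine ⟨?_, hπmem y⟩
      have h1 : ‖y - π y‖ ≤ ‖y - x‖ := hπproj y x hx
      have : dist (π y) x ≤ dist (π y) y + dist y x := dist_triangle _ _ _
      rw [mem_ball]
      have h2 : dist (π y) y = ‖y - π y‖ := by rw [dist_comm, dist_eq_norm]
      have h3 : dist y x = ‖y - x‖ := dist_eq_norm _ _
      linarith
    have := hmin (π y) hπy
    rw [hf y, hfx]
    have : (0:ℝ) ≤ Metric.infDist y D := Metric.infDist_nonneg
    linarith [hmin (π y) hπy]
  · rintro ⟨ε, hε, hmin⟩
    refine ⟨ε, hε, fun y hy => ?_⟩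
    have := hmin y hy.1
    rw [hfx, hf, hfix y hy.2, Metric.infDist_zero_of_mem hy.2, add_zero] at this
    exact this
end

section
/- Let f : ℝ² → ℝ be any function and let Γ be its set of local minimizers. Then the set of optimal values f(Γ) = { f(x) : x ∈ Γ } has empty interior in ℝ. -/
open Metric

/-- The set of local-minimum values of any function `f : ℝ² → ℝ` has empty
interior in `ℝ`. -/
theorem local_minimum_values_empty_interior
    (f : EuclideanSpace ℝ (Fin 2) → ℝ) :
    interior (f '' {x | ∃ ε > 0, ∀ y ∈ ball x ε, f x ≤ f y}) = ∅ := by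
  have hc : (f '' {x | ∃ ε > 0, ∀ y ∈ ball x ε, f x ≤ f y}).Countable := by
    have hB := TopologicalSpace.isBasis_countableBasis (EuclideanSpace ℝ (Fin 2))
    have hsub : f '' {x | ∃ ε > 0, ∀ y ∈ ball x ε, f x ≤ f y} ⊆
        ⋃ t ∈ TopologicalSpace.countableBasis (EuclideanSpace ℝ (Fin 2)),
          {v | ∃ z ∈ t, f z = v ∧ ∀ y ∈ t, f z ≤ f y} := by
      rintro v ⟨x, ⟨ε, hε, hmin⟩, rfl⟩
      obtain ⟨t, htB, hxt, hts⟩ :=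
        hB.exists_subset_of_mem_open (mem_ball_self hε) isOpen_ball
      exact Set.mem_biUnion htB ⟨x, hxt, rfl, fun y hy => hmin y (hts hy)⟩
    refine Set.Countable.mono hsub ?_
    refine (TopologicalSpace.countable_countableBasis _).biUnion fun t _ => ?_
    refine Set.Subsingleton.countable fun v hv w hw => ?_
    obtain ⟨z, hz, hzv, hzmin⟩ := hv
    obtain ⟨u, hu, huw, humin⟩ := hw
    subst hzv huw
    exact le_antisymm (hzmin u hu) (humin z hz)
  rw [interior_eq_empty_iff_dense_compl]
  exact hc.dense_compl ℝ
end
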